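/- Let Xᵢ = {x : −1 ≤ Gᵢ x ≤ 1} be symmetric polytopes and suppose the global invariance condition holds: for all x ∈ X₁×⋯×X_d and d∈D, the i-th block of (A+BK)x + Ed belongs to Xᵢ, where K is block diagonal. Then for any x⁰ ∈ Xᵢ, the input u = Kᵢ x⁰ satisfies the worst-case constraint: for every row r, (Gᵢ(A_{ii}x⁰ + Bᵢu))ᵣ + Σ_{j≠i} sup_{xⱼ∈Xⱼ}(Gᵢ A_{ij} xⱼ)ᵣ + sup_{d∈D}(Gᵢ Eᵢ d)ᵣ ≤ 1, i.e., the set of invariance-enforcing inputs at x⁰ is nonempty. -/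

import Mathlib

open Matrix

lemma mulVec_finset_sum {k l : ℕ} {ι : Type*} (s : Finset ι) (M : Matrix (Fin k) (Fin l) ℝ)
    (w : ι → Fin l → ℝ) : M.mulVec (∑ j ∈ s, w j) = ∑ j ∈ s, M.mulVec (w j) := by
  classical
  induction s using Finset.induction with
  | empty => simp [Matrix.mulVec, dotProduct]
  | insert _ _ h ih => simp [Finset.sum_insert h, Matrix.mulVec_add, ih]

lemma cont_mulVec {k l : ℕ} (M : Matrix (Fin k) (Fin l) ℝ) (s : Fin k) :
    Continuous fun x : Fin l → ℝ => M.mulVec x s := by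
  simp only [Matrix.mulVec, dotProduct]
  fun_prop

lemma sSup_attained {l : ℕ} {S : Set (Fin l → ℝ)} (hc : IsCompact S) (hne : S.Nonempty)
    {f : (Fin l → ℝ) → ℝ} (hf : Continuous f) :
    ∃ y ∈ S, f y = sSup (f '' S) := by
  obtain ⟨y, hy, hmax⟩ := hc.exists_isMaxOn hne hf.continuousOn
  refine ⟨y, hy, ?_⟩
  have hg : IsGreatest (f '' S) (f y) :=
    ⟨⟨y, hy, rfl⟩, by rintro _ ⟨z, hz, rfl⟩; exact hmax hz⟩
  exact hg.csSup_eq.symm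

theorem stmt10 {d : ℕ} (n m p N : Fin d → ℕ)
    (A : ∀ i j, Matrix (Fin (n i)) (Fin (n j)) ℝ)
    (B : ∀ i, Matrix (Fin (n i)) (Fin (m i)) ℝ)
    (K : ∀ i, Matrix (Fin (m i)) (Fin (n i)) ℝ)
    (E : ∀ i, Matrix (Fin (n i)) (Fin (p i)) ℝ)
    (G : ∀ i, Matrix (Fin (N i)) (Fin (n i)) ℝ)
    (X : ∀ i, Set (Fin (n i) → ℝ))
    (hX : ∀ i, X i = {x | ∀ k, -1 ≤ (G i).mulVec x k ∧ (G i).mulVec x k ≤ 1})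
    (hXc : ∀ i, IsCompact (X i)) (hXne : ∀ i, (X i).Nonempty)
    (D : ∀ i, Set (Fin (p i) → ℝ))
    (hDc : ∀ i, IsCompact (D i)) (hDne : ∀ i, (D i).Nonempty)
    (hinv : ∀ xs : ∀ j, Fin (n j) → ℝ, (∀ j, xs j ∈ X j) →
      ∀ ds : ∀ j, Fin (p j) → ℝ, (∀ j, ds j ∈ D j) →
      ∀ i, (∑ j, (A i j).mulVec (xs j) + (B i).mulVec ((K i).mulVec (xs i))
              + (E i).mulVec (ds i)) ∈ X i)
    (i : Fin d) (x0 : Fin (n i) → ℝ) (hx0 : x0 ∈ X i) :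
    ∀ r : Fin (N i),
      (G i).mulVec ((A i i).mulVec x0 + (B i).mulVec ((K i).mulVec x0)) r
        + ∑ j ∈ Finset.univ.erase i,
            sSup ((fun xj => ((G i) * (A i j)).mulVec xj r) '' X j)
        + sSup ((fun dd => ((G i) * (E i)).mulVec dd r) '' D i) ≤ 1 := by
  intro r
  classical
  -- maximizers for each j
  have hmax : ∀ j, ∃ xj ∈ X j, ((G i) * (A i j)).mulVec xj r
      = sSup ((fun xj => ((G i) * (A i j)).mulVec xj r) '' X j) :=
    fun j => sSup_attained (hXc j) (hXne j) (cont_mulVec _ r)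
  choose xm hxm hxms using hmax
  obtain ⟨dm, hdm, hdms⟩ := sSup_attained (hDc i) (hDne i) (cont_mulVec ((G i) * (E i)) r)
  set xs : ∀ j, Fin (n j) → ℝ := Function.update xm i x0 with hxs
  have hxsmem : ∀ j, xs j ∈ X j := by
    intro j
    by_cases hj : j = i
    · subst hj; simpa [hxs] using hx0
    · simpa [hxs, Function.update_of_ne hj] using hxm j
  set ds : ∀ j, Fin (p j) → ℝ := Function.update (fun j => (hDne j).some) i dm with hds
  have hdsmem : ∀ j, ds j ∈ D j := by
    intro j
    by_cases hj : j = i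
    · subst hj; simpa [hds] using hdm
    · simpa [hds, Function.update_of_ne hj] using (hDne j).some_mem
  have h := hinv xs hxsmem ds hdsmem i
  rw [hX i] at h
  have h1 := (h r).2
  have hxsi : xs i = x0 := by simp [hxs]
  have hdsi : ds i = dm := by simp [hds]
  have hsum : (∑ j, (A i j).mulVec (xs j)) =
      (A i i).mulVec x0 + ∑ j ∈ Finset.univ.erase i, (A i j).mulVec (xm j) := by
    rw [← Finset.add_sum_erase _ _ (Finset.mem_univ i), hxsi]
    congr 1
    exact Finset.sum_congr rfl fun j hj =>
      by rw [hxs, Function.update_of_ne (Finset.mem_erase.mp hj).1]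
  rw [hsum, hdsi] at h1
  simp only [Matrix.mulVec_add, Pi.add_apply, mulVec_finset_sum,
    Finset.sum_apply] at h1
  calc (G i).mulVec ((A i i).mulVec x0 + (B i).mulVec ((K i).mulVec x0)) r
        + ∑ j ∈ Finset.univ.erase i,
            sSup ((fun xj => ((G i) * (A i j)).mulVec xj r) '' X j)
        + sSup ((fun dd => ((G i) * (E i)).mulVec dd r) '' D i)
      = (G i).mulVec ((A i i).mulVec x0 + (B i).mulVec ((K i).mulVec x0)) r
        + ∑ j ∈ Finset.univ.erase i, (G i).mulVec ((A i j).mulVec (xm j)) r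
        + (G i).mulVec ((E i).mulVec dm) r := by
        rw [← hdms]
        congr 1
        · congr 1
          exact Finset.sum_congr rfl fun j _ => by rw [← hxms j, Matrix.mulVec_mulVec]
        · rw [Matrix.mulVec_mulVec]
    _ ≤ 1 := by
        rw [hxsi] at h1
        simp only [Matrix.mulVec_add, Pi.add_apply] at h1 ⊢
        linarith [h1]
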